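/- Let G be a finite simple graph, k ≥ 1, and let I and S be independent sets of G, each of size k. Suppose there is a vertex i₀ ∈ I such that every vertex of I ∖ {i₀} is not in S and is not adjacent to any vertex of S. Then I can be TJ-transformed into S. -/

import Mathlib

/-- `I` is an independent set of `G`: its vertices are pairwise non-adjacent. -/
def IsIndep {V : Type*} (G : SimpleGraph V) (I : Finset V) : Prop :=
  ∀ a ∈ I, ∀ b ∈ I, a ≠ b → ¬ G.Adj a b

/-- Two independent sets of size `k` are TJ-adjacent if the second is obtained from the
first by replacing one vertex `u ∈ I` by a vertex `v ∉ I`. -/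
def TJStep {V : Type*} [DecidableEq V] (G : SimpleGraph V) (k : ℕ) (I J : Finset V) : Prop :=
  IsIndep G I ∧ IsIndep G J ∧ I.card = k ∧ J.card = k ∧
    ∃ u ∈ I, ∃ v, v ∉ I ∧ J = insert v (I.erase u)

/-- `I` can be TJ-transformed into `J`: there is a finite sequence of independent sets of
size `k`, starting at `I` and ending at `J`, in which consecutive sets are TJ-adjacent. -/
def TJReach {V : Type*} [DecidableEq V] (G : SimpleGraph V) (k : ℕ) (I J : Finset V) : Prop :=
  Relation.ReflTransGen (TJStep G k) I J

lemma tj_aux {V : Type*} [DecidableEq V] (G : SimpleGraph V) (k : ℕ)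
    (I S : Finset V) (hS : IsIndep G S) (hScard : S.card = k) (i₀ : V)
    (hanti : ∀ w ∈ I, w ≠ i₀ → w ∉ S ∧ ∀ s ∈ S, ¬ G.Adj w s) :
    ∀ n (J : Finset V), (J \ S).card = n → J.card = k → IsIndep G J →
      J ⊆ S ∪ I.erase i₀ → TJReach G k J S := by
  intro n
  induction n with
  | zero =>
    intro J h0 hJc hJi hJsub
    have hsub : J ⊆ S := fun x hx => by
      by_contra hxS
      have : x ∈ J \ S := Finset.mem_sdiff.2 ⟨hx, hxS⟩
      simp [Finset.card_eq_zero.1 h0] at this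
    have : J = S := Finset.eq_of_subset_of_card_le hsub (by omega)
    exact this ▸ Relation.ReflTransGen.refl
  | succ n ih =>
    intro J hcard hJc hJi hJsub
    have hJS : (J \ S).Nonempty := Finset.card_pos.1 (by omega)
    obtain ⟨w, hw⟩ := hJS
    have hwJ : w ∈ J := (Finset.mem_sdiff.1 hw).1
    have hwS : w ∉ S := (Finset.mem_sdiff.1 hw).2
    have hSJ : (S \ J).Nonempty := by
      have := Finset.card_sdiff_comm (hJc.trans hScard.symm)
      refine Finset.card_pos.1 ?_
      omega
    obtain ⟨s, hs⟩ := hSJ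
    have hsS : s ∈ S := (Finset.mem_sdiff.1 hs).1
    have hsJ : s ∉ J := (Finset.mem_sdiff.1 hs).2
    set J' := insert s (J.erase w) with hJ'
    have hJ'sub : J' ⊆ S ∪ I.erase i₀ := by
      intro x hx
      rcases Finset.mem_insert.1 hx with rfl | hx
      · exact Finset.mem_union_left _ hsS
      · exact hJsub (Finset.mem_of_mem_erase hx)
    -- independence of J'
    have hJ'i : IsIndep G J' := by
      have key : ∀ b ∈ J.erase w, ¬ G.Adj s b := by
        intro b hb
        have hbJ : b ∈ J := Finset.mem_of_mem_erase hb
        rcases Finset.mem_union.1 (hJsub hbJ) with hbS | hbI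
        · by_cases hbs : b = s
          · subst hbs; exact fun h => G.loopless.irrefl _ h
          · exact hS s hsS b hbS (fun h => hbs h.symm)
        · have hbI' := Finset.mem_of_mem_erase hbI
          have hbne : b ≠ i₀ := Finset.ne_of_mem_erase hbI
          exact fun h => (hanti b hbI' hbne).2 s hsS h.symm
      intro a ha b hb hab
      rw [hJ'] at ha hb
      rcases Finset.mem_insert.1 ha with rfl | ha'
      · rcases Finset.mem_insert.1 hb with rfl | hb'
        · exact absurd rfl hab
        · exact key b hb'
      · rcases Finset.mem_insert.1 hb with rfl | hb'
        · exact fun h => key a ha' h.symm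
        · exact hJi a (Finset.mem_of_mem_erase ha') b (Finset.mem_of_mem_erase hb') hab
    have hsJe : s ∉ J.erase w := fun h => hsJ (Finset.mem_of_mem_erase h)
    have hJ'c : J'.card = k := by
      rw [hJ', Finset.card_insert_of_notMem hsJe, Finset.card_erase_of_mem hwJ]
      have : 1 ≤ J.card := Finset.card_pos.2 ⟨w, hwJ⟩
      omega
    have hstep : TJStep G k J J' :=
      ⟨hJi, hJ'i, hJc, hJ'c, w, hwJ, s, hsJ, rfl⟩
    have hsd : J' \ S = (J \ S).erase w := by
      ext x
      simp only [hJ', Finset.mem_sdiff, Finset.mem_insert, Finset.mem_erase]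
      constructor
      · rintro ⟨rfl | ⟨hne, hxJ⟩, hxS⟩
        · exact absurd hsS hxS
        · exact ⟨hne, hxJ, hxS⟩
      · rintro ⟨hne, hxJ, hxS⟩
        exact ⟨Or.inr ⟨hne, hxJ⟩, hxS⟩
    have : (J' \ S).card = n := by
      rw [hsd, Finset.card_erase_of_mem hw, hcard]
      omega
    exact Relation.ReflTransGen.head hstep (ih J' this hJ'c hJ'i hJ'sub)

theorem tj_transform_of_anticomplete {V : Type*} [Fintype V] [DecidableEq V]
    (G : SimpleGraph V) (k : ℕ) (hk : 1 ≤ k) (I S : Finset V)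
    (hI : IsIndep G I) (hS : IsIndep G S) (hIcard : I.card = k) (hScard : S.card = k)
    (i₀ : V) (hi₀ : i₀ ∈ I)
    (hanticomplete : ∀ w ∈ I, w ≠ i₀ → w ∉ S ∧ ∀ s ∈ S, ¬ G.Adj w s) :
    TJReach G k I S := by
  by_cases h0 : i₀ ∈ S
  · exact tj_aux G k I S hS hScard i₀ hanticomplete _ I rfl hIcard hI
      (fun x hx => by
        by_cases hxi : x = i₀
        · exact Finset.mem_union_left _ (hxi ▸ h0)
        · exact Finset.mem_union_right _ (Finset.mem_erase.2 ⟨hxi, hx⟩))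
  · -- first move i₀ to some s ∈ S
    have hSne : S.Nonempty := Finset.card_pos.1 (by omega)
    obtain ⟨s, hsS⟩ := hSne
    have hsI : s ∉ I := by
      intro hsI
      by_cases hsi : s = i₀
      · exact h0 (hsi ▸ hsS)
      · exact (hanticomplete s hsI hsi).1 hsS
    set I₁ := insert s (I.erase i₀) with hI₁
    have hI₁i : IsIndep G I₁ := by
      have key : ∀ b ∈ I.erase i₀, ¬ G.Adj s b := by
        intro b hb
        have hbI := Finset.mem_of_mem_erase hb
        have hbne := Finset.ne_of_mem_erase hb
        exact fun h => (hanticomplete b hbI hbne).2 s hsS h.symm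
      intro a ha b hb hab
      rw [hI₁] at ha hb
      rcases Finset.mem_insert.1 ha with rfl | ha'
      · rcases Finset.mem_insert.1 hb with rfl | hb'
        · exact absurd rfl hab
        · exact key b hb'
      · rcases Finset.mem_insert.1 hb with rfl | hb'
        · exact fun h => key a ha' h.symm
        · exact hI a (Finset.mem_of_mem_erase ha') b (Finset.mem_of_mem_erase hb') hab
    have hsIe : s ∉ I.erase i₀ := fun h => hsI (Finset.mem_of_mem_erase h)
    have hI₁c : I₁.card = k := by
      rw [hI₁, Finset.card_insert_of_notMem hsIe, Finset.card_erase_of_mem hi₀]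
      omega
    have hstep : TJStep G k I I₁ := ⟨hI, hI₁i, hIcard, hI₁c, i₀, hi₀, s, hsI, rfl⟩
    have hsub : I₁ ⊆ S ∪ I.erase i₀ := by
      intro x hx
      rcases Finset.mem_insert.1 hx with rfl | hx
      · exact Finset.mem_union_left _ hsS
      · exact Finset.mem_union_right _ hx
    exact Relation.ReflTransGen.head hstep
      (tj_aux G k I S hS hScard i₀ hanticomplete _ I₁ rfl hI₁c hI₁i hsub)
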